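/- Let A be a commutative unital complex Banach algebra and let a₁,…,aₙ ∈ A be elements that topologically generate A, i.e. the ℂ-subalgebra of polynomials in a₁,…,aₙ is dense in A. Then the map χ ↦ (χ(a₁),…,χ(aₙ)) is a homeomorphism from the character space of A onto its image X ⊆ ℂⁿ, and X is a compact polynomially convex set. -/

import Mathlib

set_option synthInstance.maxHeartbeats 400000
set_option maxHeartbeats 1000000

/-- A compact set `K ⊆ ℂⁿ` is polynomially convex if it contains every point `w ∈ ℂⁿ`
such that `|p w| ≤ sup_{z ∈ K} |p z|` for every complex polynomial `p`. -/
def IsPolyConvex {n : ℕ} (K : Set (Fin n → ℂ)) : Prop :=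
  ∀ w : Fin n → ℂ,
    (∀ p : MvPolynomial (Fin n) ℂ,
      ‖MvPolynomial.eval w p‖ ≤ ⨆ z : K, ‖MvPolynomial.eval (z : Fin n → ℂ) p‖) →
    w ∈ K

open MvPolynomial WeakDual in
private lemma char_aeval' {A : Type*} [NormedCommRing A] [NormedAlgebra ℂ A] [CompleteSpace A]
    {n : ℕ} (a : Fin n → A) (χ : characterSpace ℂ A) (q : MvPolynomial (Fin n) ℂ) :
    (χ : WeakDual ℂ A) (MvPolynomial.aeval a q)
      = MvPolynomial.eval (fun i => (χ : WeakDual ℂ A) (a i)) q := by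
  have h := MvPolynomial.comp_aeval_apply (CharacterSpace.toAlgHom χ) (f := a) q
  change (CharacterSpace.toAlgHom χ) (aeval a q) = _
  rw [h]
  rw [MvPolynomial.aeval_eq_eval₂Hom, Algebra.algebraMap_self]
  rfl

/-- **The joint spectrum of generators.** Let `A` be a commutative unital complex
Banach algebra topologically generated by `a₁, …, aₙ` (i.e. polynomials in the `aᵢ` are
dense). Then `χ ↦ (χ a₁, …, χ aₙ)` is a homeomorphism from the character space of `A`
onto its image `X ⊆ ℂⁿ`, and `X` is compact and polynomially convex. -/
theorem characterSpace_homeo_jointSpectrum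
    {A : Type*} [NormedCommRing A] [NormedAlgebra ℂ A] [CompleteSpace A]
    {n : ℕ} (a : Fin n → A)
    (hdense : Dense (Set.range fun q : MvPolynomial (Fin n) ℂ => MvPolynomial.aeval a q))
    (X : Set (Fin n → ℂ))
    (hX : X = Set.range fun χ : WeakDual.characterSpace ℂ A =>
      (fun i => (χ : WeakDual ℂ A) (a i))) :
    (∃ e : WeakDual.characterSpace ℂ A ≃ₜ X,
      ∀ (χ : WeakDual.characterSpace ℂ A) (i : Fin n),
        (e χ : Fin n → ℂ) i = (χ : WeakDual ℂ A) (a i)) ∧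
    IsCompact X ∧ IsPolyConvex X := by
  subst hX
  have hΦc : Continuous (fun χ : WeakDual.characterSpace ℂ A =>
      (fun i => (χ : WeakDual ℂ A) (a i))) :=
    continuous_pi fun i => (WeakDual.eval_continuous (a i)).comp continuous_subtype_val
  have hinj : Function.Injective (fun χ : WeakDual.characterSpace ℂ A =>
      (fun i => (χ : WeakDual ℂ A) (a i))) := by
    intro χ χ' h
    have heq : Set.EqOn ((χ : WeakDual ℂ A) : A → ℂ) ((χ' : WeakDual ℂ A) : A → ℂ)
        (Set.range fun q : MvPolynomial (Fin n) ℂ => MvPolynomial.aeval a q) := by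
      rintro x ⟨q, rfl⟩
      rw [char_aeval', char_aeval', show (fun i => (χ : WeakDual ℂ A) (a i))
        = (fun i => (χ' : WeakDual ℂ A) (a i)) from h]
    have := Continuous.ext_on hdense (map_continuous _) (map_continuous _) heq
    exact Subtype.ext (DFunLike.coe_injective this)
  refine ⟨?_, isCompact_range hΦc, ?_⟩
  · letI e0 := Equiv.ofInjective _ hinj
    have hc : Continuous e0 := hΦc.subtype_mk _
    exact ⟨Continuous.homeoOfEquivCompactToT2 hc, fun χ i => rfl⟩
  · intro w hw
    -- key norm bound
    have key : ∀ q : MvPolynomial (Fin n) ℂ,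
        ‖MvPolynomial.eval w q‖ ≤ ‖(1 : A)‖ * ‖MvPolynomial.aeval a q‖ := by
      intro q
      refine (hw q).trans (Real.iSup_le ?_ (by positivity))
      rintro ⟨z, χ, rfl⟩
      rw [← char_aeval']
      calc ‖(χ : WeakDual ℂ A) (MvPolynomial.aeval a q)‖
          ≤ ‖WeakDual.toStrongDual (χ : WeakDual ℂ A)‖ * ‖MvPolynomial.aeval a q‖ :=
            ContinuousLinearMap.le_opNorm _ _
        _ ≤ _ := by
            gcongr
            exact WeakDual.CharacterSpace.norm_le_norm_one χ
    have hwd : ∀ q q' : MvPolynomial (Fin n) ℂ,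
        MvPolynomial.aeval a q = MvPolynomial.aeval a q' →
        MvPolynomial.eval w q = MvPolynomial.eval w q' := by
      intro q q' h
      have h2 := key (q - q')
      rw [map_sub, map_sub, h, sub_self, norm_zero, mul_zero] at h2
      exact sub_eq_zero.mp (norm_le_zero_iff.mp h2)
    set S := (MvPolynomial.aeval (R := ℂ) a).range with hS
    have hmem : ∀ s : S, ∃ q : MvPolynomial (Fin n) ℂ,
        MvPolynomial.aeval a q = (s : A) := fun s => s.2
    choose Q hQ using hmem
    have hf0 : ∀ (q) (s : S), MvPolynomial.aeval a q = (s : A) →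
        MvPolynomial.eval w q = MvPolynomial.eval w (Q s) :=
      fun q s h => hwd _ _ (h.trans (hQ s).symm)
    let ψ : S →ₗ[ℂ] ℂ :=
      { toFun := fun s => MvPolynomial.eval w (Q s)
        map_add' := fun s t => by
          show MvPolynomial.eval w (Q (s + t))
            = MvPolynomial.eval w (Q s) + MvPolynomial.eval w (Q t)
          rw [← hf0 (Q s + Q t) (s + t) (by simp [hQ]), map_add]
        map_smul' := fun c s => by
          show MvPolynomial.eval w (Q (c • s)) = c • MvPolynomial.eval w (Q s)
          rw [← hf0 (c • Q s) (c • s)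
            (by rw [map_smul, hQ]; rfl)]
          simp [MvPolynomial.smul_eq_C_mul] }
    let ψc : S →L[ℂ] ℂ := LinearMap.mkContinuous ψ ‖(1 : A)‖ (fun s => by
      have := key (Q s)
      rw [hQ s] at this
      exact this)
    let e : S →L[ℂ] A := LinearMap.mkContinuous (Subalgebra.val S).toLinearMap 1
      (fun s => by simp; exact le_rfl)
    have hde : DenseRange e := by
      have hre : Set.range ⇑e
          = Set.range fun q : MvPolynomial (Fin n) ℂ => MvPolynomial.aeval a q := by
        ext x
        constructor
        · rintro ⟨s, rfl⟩
          exact ⟨Q s, hQ s⟩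
        · rintro ⟨q, rfl⟩
          exact ⟨⟨MvPolynomial.aeval a q, ⟨q, rfl⟩⟩, rfl⟩
      rw [DenseRange, hre]
      exact hdense
    have hiso : Isometry (⇑e) := fun x y => rfl
    have hui : IsUniformInducing ⇑e := hiso.isUniformInducing
    let φ : A →L[ℂ] ℂ := ψc.extend e
    have hφ : ∀ q : MvPolynomial (Fin n) ℂ,
        φ (MvPolynomial.aeval a q) = MvPolynomial.eval w q := by
      intro q
      have h1 : MvPolynomial.aeval a q = e ⟨MvPolynomial.aeval a q, ⟨q, rfl⟩⟩ := rfl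
      rw [h1]
      exact (ContinuousLinearMap.extend_eq (f := ψc) hde hui _).trans (hf0 q _ rfl).symm
    have hφ1 : φ 1 = 1 := by
      have := hφ 1
      simpa using this
    have hmul : ∀ x y : A, φ (x * y) = φ x * φ y := by
      have hdp : Dense ((Set.range fun q : MvPolynomial (Fin n) ℂ => MvPolynomial.aeval a q)
          ×ˢ (Set.range fun q : MvPolynomial (Fin n) ℂ => MvPolynomial.aeval a q)) :=
        hdense.prod hdense
      have hc1 : Continuous fun p : A × A => φ (p.1 * p.2) :=
        φ.continuous.comp continuous_mul
      have hc2 : Continuous fun p : A × A => φ p.1 * φ p.2 :=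
        (φ.continuous.comp continuous_fst).mul (φ.continuous.comp continuous_snd)
      have heq : Set.EqOn (fun p : A × A => φ (p.1 * p.2)) (fun p : A × A => φ p.1 * φ p.2)
          ((Set.range fun q : MvPolynomial (Fin n) ℂ => MvPolynomial.aeval a q)
            ×ˢ (Set.range fun q : MvPolynomial (Fin n) ℂ => MvPolynomial.aeval a q)) := by
        rintro ⟨x, y⟩ ⟨⟨q, rfl⟩, ⟨q', rfl⟩⟩
        show φ (MvPolynomial.aeval a q * MvPolynomial.aeval a q') = _
        rw [← map_mul, hφ, map_mul]
        show _ = φ (MvPolynomial.aeval a q) * φ (MvPolynomial.aeval a q')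
        rw [hφ, hφ]
      have hfg := Continuous.ext_on hdp hc1 hc2 heq
      intro x y
      exact congrFun hfg (x, y)
    have hne : (show WeakDual ℂ A from φ) ≠ 0 := by
      intro h
      have h' : φ = 0 := h
      rw [h'] at hφ1
      simp at hφ1
    refine ⟨⟨show WeakDual ℂ A from φ, hne, hmul⟩, funext fun i => ?_⟩
    show φ (a i) = w i
    rw [← MvPolynomial.aeval_X (R := ℂ) a i, hφ, MvPolynomial.eval_X]
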